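/- Let G be a simple graph on a vertex type V and let k ≥ 1 be a natural number. Define the simple graph G′ on (V × Fin (k+1)) ⊕ Fin k with the following edges: for each 0 ≤ i < k, an edge between (v,i) and (v,i+1) for every v; an edge between (u,i) and (v,i+1) whenever u and v are adjacent in G; an edge between s_i and (v,i) and between s_i and (v,i+1) for every v and every i < k (where s_i denotes the i-th vertex of the Fin k summand); and an edge between s_i and s_{i+1} for every i < k−1. Then for all u, v ∈ V, the extended shortest-path distance in G′ satisfies edist_{G′}((u,0), (v,k)) = max(min(edist_G(u,v), k+1), k), where edist denotes distance in ℕ∞ (taking the value ∞ for unreachable pairs). -/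
import Mathlib


/-- The layered graph of Lemma 4.3: `k+1` copies of the vertex set of `G`
(the layers), lazy edges `(v,i)–(v,i+1)`, edges `(u,i)–(v,i+1)` mirroring the
edges of `G`, and helper vertices `s_0, …, s_{k-1}` where `s_i` is joined to
all of layers `i` and `i+1` and to `s_{i+1}`. -/
def layeredGraph {V : Type*} (G : SimpleGraph V) (k : ℕ) :
    SimpleGraph ((V × Fin (k + 1)) ⊕ Fin k) :=
  SimpleGraph.fromRel (fun a b =>
    match a, b with
    | Sum.inl (u, i), Sum.inl (v, j) =>
        (j : ℕ) = (i : ℕ) + 1 ∧ (u = v ∨ G.Adj u v)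
    | Sum.inr s, Sum.inl (_, j) => (j : ℕ) = (s : ℕ) ∨ (j : ℕ) = (s : ℕ) + 1
    | Sum.inr s, Sum.inr s' => (s' : ℕ) = (s : ℕ) + 1
    | _, _ => False)

namespace Stmt9Aux

open SimpleGraph

variable {V : Type*} {G : SimpleGraph V} {k : ℕ}

/-- The layer (potential) of a vertex of the layered graph. -/
def pot : (V × Fin (k + 1)) ⊕ Fin k → ℕ
  | Sum.inl (_, i) => i
  | Sum.inr s => s

lemma adj_pot {a b : (V × Fin (k + 1)) ⊕ Fin k} (h : (layeredGraph G k).Adj a b) :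
    pot b ≤ pot a + 1 ∧ pot a ≤ pot b + 1 := by
  obtain ⟨hne, h | h⟩ := h <;>
    rcases a with ⟨u, i⟩ | s <;> rcases b with ⟨v, j⟩ | s' <;>
    simp only [pot] <;> first
      | exact h.elim
      | (rcases h with h | h <;> omega)
      | (obtain ⟨h, -⟩ := h; omega)
      | omega

lemma length_lower {a b : (V × Fin (k + 1)) ⊕ Fin k} (p : (layeredGraph G k).Walk a b) :
    pot b ≤ pot a + p.length := by
  induction p with
  | nil => simp
  | cons h q ih =>
    have := (adj_pot h).1
    rw [SimpleGraph.Walk.length_cons]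
    omega

/-- A walk of length exactly the layer gap between two layer vertices projects to a
walk in `G`. -/
lemma edist_le_of_tight :
    ∀ {a b : (V × Fin (k + 1)) ⊕ Fin k} (p : (layeredGraph G k).Walk a b)
      {u v : V} {i j : Fin (k + 1)}, a = Sum.inl (u, i) → b = Sum.inl (v, j) →
      (j : ℕ) = (i : ℕ) + p.length → G.edist u v ≤ p.length := by
  intro a b p
  induction p with
  | nil =>
    rintro u v i j rfl hb hlen
    obtain ⟨rfl, -⟩ := Prod.mk.injEq .. ▸ Sum.inl.inj hb
    simp [edist_self]
  | @cons a c b h q ih =>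
    rintro u v i j rfl rfl hlen
    rw [SimpleGraph.Walk.length_cons] at hlen
    have hlow := length_lower q
    have hadj := (adj_pot h).1
    have hcpot : pot c = (i : ℕ) + 1 := by
      simp only [pot] at hlow hadj ⊢
      omega
    rcases c with ⟨w, i'⟩ | s
    · -- vertex in the next layer
      have hi' : (i' : ℕ) = (i : ℕ) + 1 := hcpot
      have hstep : u = w ∨ G.Adj u w := by
        obtain ⟨-, h | h⟩ := h
        · exact h.2
        · obtain ⟨h1, -⟩ := h; omega
      have hrest : G.edist w v ≤ q.length := ih rfl rfl (by omega)
      have h1 : G.edist u w ≤ 1 := by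
        rcases hstep with rfl | hstep
        · simp [edist_self]
        · exact le_of_eq (edist_eq_one_iff_adj.mpr hstep)
      calc G.edist u v ≤ G.edist u w + G.edist w v := SimpleGraph.edist_triangle
        _ ≤ 1 + q.length := add_le_add h1 hrest
        _ = ((q.length + 1 : ℕ) : ℕ∞) := by push_cast; ring
        _ = _ := by rw [SimpleGraph.Walk.length_cons]
    · -- impossible: a helper vertex can't be one layer higher
      exfalso
      have hs : (s : ℕ) = (i : ℕ) + 1 := hcpot
      obtain ⟨-, h | h⟩ := h
      · exact h
      · rcases h with h | h <;> omega

/-- Lazy walks within a single column. -/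
lemma lazy_walk (v : V) :
    ∀ (d : ℕ) (i j : Fin (k + 1)), (j : ℕ) = (i : ℕ) + d →
      ∃ p : (layeredGraph G k).Walk (Sum.inl (v, i)) (Sum.inl (v, j)), p.length = d := by
  intro d
  induction d with
  | zero =>
    intro i j hij
    have : i = j := Fin.ext (by omega)
    subst this
    exact ⟨SimpleGraph.Walk.nil, rfl⟩
  | succ d ihd =>
    intro i j hij
    have hi1 : (i : ℕ) + 1 < k + 1 := by omega
    obtain ⟨p, hp⟩ := ihd ⟨(i : ℕ) + 1, hi1⟩ j (by simp only [Fin.val_mk]; omega)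
    have hadj : (layeredGraph G k).Adj (Sum.inl (v, i)) (Sum.inl (v, ⟨(i : ℕ) + 1, hi1⟩)) := by
      refine ⟨?_, Or.inl ⟨by simp, Or.inl rfl⟩⟩
      simp only [ne_eq, Sum.inl.injEq, Prod.mk.injEq, not_and]
      intro _ hc
      exact absurd (congrArg Fin.val hc) (by simp)
    exact ⟨SimpleGraph.Walk.cons hadj p, by simp [hp]⟩

/-- Walks mirroring a walk of `G`. -/
lemma mirror_walk :
    ∀ {u v : V} (q : G.Walk u v) (i j : Fin (k + 1)), (j : ℕ) = (i : ℕ) + q.length →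
      ∃ p : (layeredGraph G k).Walk (Sum.inl (u, i)) (Sum.inl (v, j)), p.length = q.length := by
  intro u v q
  induction q with
  | nil =>
    intro i j hij
    have hij' : i = j := Fin.ext (by simp at hij; omega)
    subst hij'
    exact ⟨SimpleGraph.Walk.nil, rfl⟩
  | @cons u w v hadj q ihq =>
    intro i j hij
    rw [SimpleGraph.Walk.length_cons] at hij
    have hi1 : (i : ℕ) + 1 < k + 1 := by omega
    obtain ⟨p, hp⟩ := ihq ⟨(i : ℕ) + 1, hi1⟩ j (by simp only [Fin.val_mk]; omega)
    have hadj' : (layeredGraph G k).Adj (Sum.inl (u, i)) (Sum.inl (w, ⟨(i : ℕ) + 1, hi1⟩)) := by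
      refine ⟨?_, Or.inl ⟨by simp, Or.inr hadj⟩⟩
      simp only [ne_eq, Sum.inl.injEq, Prod.mk.injEq, not_and]
      intro _ hc
      exact absurd (congrArg Fin.val hc) (by simp)
    exact ⟨SimpleGraph.Walk.cons hadj' p, by simp [hp]⟩

/-- Walks running up the helper vertices to the top layer. -/
lemma helper_walk (v : V) :
    ∀ (d : ℕ) (s : Fin k), (s : ℕ) + d = k →
      ∃ p : (layeredGraph G k).Walk (Sum.inr s) (Sum.inl (v, Fin.last k)), p.length = d := by
  intro d
  induction d with
  | zero => intro s hs; exact absurd hs (by have := s.isLt; omega)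
  | succ d ihd =>
    intro s hs
    rcases Nat.eq_zero_or_pos d with rfl | hd
    · -- single edge from s = k-1 to the top layer
      have hadj : (layeredGraph G k).Adj (Sum.inr s) (Sum.inl (v, Fin.last k)) :=
        ⟨by simp, Or.inl (Or.inr (by simp only [Fin.val_last]; omega))⟩
      exact ⟨SimpleGraph.Walk.cons hadj SimpleGraph.Walk.nil, by simp⟩
    · have hs1 : (s : ℕ) + 1 < k := by omega
      obtain ⟨p, hp⟩ := ihd ⟨(s : ℕ) + 1, hs1⟩ (by simp only [Fin.val_mk]; omega)
      have hadj : (layeredGraph G k).Adj (Sum.inr s) (Sum.inr (⟨(s : ℕ) + 1, hs1⟩ : Fin k)) := by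
        refine ⟨?_, Or.inl (by simp)⟩
        simp only [ne_eq, Sum.inr.injEq]
        intro hc
        exact absurd (congrArg Fin.val hc) (by simp)
      exact ⟨SimpleGraph.Walk.cons hadj p, by simp [hp]⟩

end Stmt9Aux

open Stmt9Aux SimpleGraph in
theorem stmt_9 {V : Type*} (G : SimpleGraph V) (k : ℕ) (hk : 1 ≤ k)
    (u v : V) :
    (layeredGraph G k).edist (Sum.inl (u, 0)) (Sum.inl (v, Fin.last k))
      = max (min (G.edist u v) ((k : ℕ∞) + 1)) (k : ℕ∞) := by
  have pot0 : pot (V := V) (k := k) (Sum.inl (u, 0)) = 0 := by simp [pot]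
  have potk : pot (V := V) (k := k) (Sum.inl (v, Fin.last k)) = k := by simp [pot]
  have lb : ∀ p : (layeredGraph G k).Walk (Sum.inl (u, 0)) (Sum.inl (v, Fin.last k)),
      k ≤ p.length := by
    intro p
    have := length_lower p
    omega
  have lbE : (k : ℕ∞) ≤ (layeredGraph G k).edist (Sum.inl (u, 0)) (Sum.inl (v, Fin.last k)) :=
    le_iInf fun p => by exact_mod_cast lb p
  by_cases hle : G.edist u v ≤ (k : ℕ∞)
  · -- distance at most k: answer is k
    have hrhs : max (min (G.edist u v) ((k : ℕ∞) + 1)) (k : ℕ∞) = k := by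
      rw [min_eq_left (le_trans hle le_self_add), max_eq_right hle]
    rw [hrhs]
    refine le_antisymm ?_ lbE
    have hne : G.edist u v ≠ ⊤ := fun h => by simp [h] at hle
    obtain ⟨q, hq⟩ := exists_walk_of_edist_ne_top hne
    have hqk : q.length ≤ k := by exact_mod_cast hq ▸ hle
    obtain ⟨p1, hp1⟩ := mirror_walk (k := k) q 0 ⟨q.length, by omega⟩
      (by simp only [Fin.val_mk, Fin.val_zero]; omega)
    obtain ⟨p2, hp2⟩ := lazy_walk (k := k) v (k - q.length) ⟨q.length, by omega⟩ (Fin.last k)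
      (by simp only [Fin.val_mk, Fin.val_last]; omega)
    have hle2 := SimpleGraph.edist_le (p1.append p2)
    rw [SimpleGraph.Walk.length_append, hp1, hp2] at hle2
    calc (layeredGraph G k).edist (Sum.inl (u, 0)) (Sum.inl (v, Fin.last k))
        ≤ ((q.length + (k - q.length) : ℕ) : ℕ∞) := hle2
      _ = (k : ℕ∞) := by congr 1; omega
  · -- distance exceeding k: answer is k+1
    have hgt : (k : ℕ∞) + 1 ≤ G.edist u v :=
      ENat.add_one_le_iff (by simp) |>.mpr (not_le.mp hle)
    have hrhs : max (min (G.edist u v) ((k : ℕ∞) + 1)) (k : ℕ∞) = (k : ℕ∞) + 1 := by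
      rw [min_eq_right hgt, max_eq_left le_self_add]
    rw [hrhs]
    refine le_antisymm ?_ ?_
    · -- upper bound: the ceiling walk through helper vertices
      obtain ⟨p, hp⟩ := helper_walk (G := G) (k := k) v k ⟨0, by omega⟩ (by simp only [Fin.val_mk]; omega)
      have hadj : (layeredGraph G k).Adj (Sum.inl (u, 0)) (Sum.inr (⟨0, by omega⟩ : Fin k)) :=
        ⟨by simp, Or.inr (Or.inl (by simp))⟩
      have := SimpleGraph.edist_le (SimpleGraph.Walk.cons hadj p)
      rw [SimpleGraph.Walk.length_cons, hp] at this
      calc (layeredGraph G k).edist (Sum.inl (u, 0)) (Sum.inl (v, Fin.last k))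
          ≤ ((k + 1 : ℕ) : ℕ∞) := this
        _ = (k : ℕ∞) + 1 := by push_cast; ring
    · -- lower bound: any walk has length ≥ k+1
      refine le_iInf fun p => ?_
      have hk' : k ≤ p.length := lb p
      have hne : p.length ≠ k := by
        intro hlen
        have : G.edist u v ≤ (p.length : ℕ∞) :=
          edist_le_of_tight p rfl rfl (by simp only [Fin.val_last, Fin.val_zero]; omega)
        rw [hlen] at this
        exact hle this
      have : k + 1 ≤ p.length := by omega
      exact_mod_cast this
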